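/- Let (Q_n,0), (Q_n,1) be the two halves of Q_{n+1}, n ≥ 2. Let G' be a Hamiltonian subgraph of (Q_n,0), R' the cross edges between (Q_n,1) and G', and G = (Q_n,1) ∪ R' ∪ G'. Then G is bipancyclic: G contains a cycle of every even length l with 4 ≤ l ≤ 2^n + |V(G')|. -/

import Mathlib

def Q (n : ℕ) : SimpleGraph (Fin n → ZMod 2) where
  Adj x y := hammingDist x y = 1
  symm := ⟨fun x y h => by
    have h' : hammingDist x y = 1 := h
    show hammingDist y x = 1
    rwa [hammingDist_comm]⟩
  loopless := ⟨fun x h => by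
    have h' : hammingDist x x = 1 := h
    simp [hammingDist_self] at h'⟩

/-- `G` is bipancyclic: it contains a cycle of every even length `l` with `4 ≤ l ≤ |V(G)|`. -/
def Bipancyclic {V : Type*} (G : SimpleGraph V) : Prop :=
  ∀ l : ℕ, 4 ≤ l → l ≤ Nat.card V → Even l →
    ∃ (v : V) (c : G.Walk v v), c.IsCycle ∧ c.length = l

/-- The half `(Q_n, t)` of `Q_{n+1}`: vertices whose last coordinate equals `t`. -/
def half (n : ℕ) (t : ZMod 2) : Set (Fin (n+1) → ZMod 2) := {v | v (Fin.last n) = t}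

/-- A cross edge of `Q_{n+1}`: an edge whose endpoints differ in the last coordinate. -/
def crossAdj (n : ℕ) (u v : Fin (n+1) → ZMod 2) : Prop :=
  (Q (n+1)).Adj u v ∧ u (Fin.last n) ≠ v (Fin.last n)

/-- The subgraph `G = (Q_n,1) ∪ R' ∪ G'` of `Q_{n+1}`, where `G'` is a subgraph of the half
`(Q_n,0)` and `R'` is the set of cross edges between the half `(Q_n,1)` and `G'`. -/
def mix (n : ℕ) (G' : (Q (n+1)).Subgraph) : (Q (n+1)).Subgraph where
  verts := half n 1 ∪ G'.verts
  Adj u v := G'.Adj u v ∨ ((Q (n+1)).Adj u v ∧ u ∈ half n 1 ∧ v ∈ half n 1) ∨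
    (crossAdj n u v ∧ ((u ∈ G'.verts ∧ v ∈ half n 1) ∨ (v ∈ G'.verts ∧ u ∈ half n 1)))
  adj_sub := fun h => by
    rcases h with h | h | h
    · exact G'.adj_sub h
    · exact h.1
    · exact h.1.1
  edge_vert := fun h => by
    rcases h with h | h | h
    · exact Or.inr (G'.edge_vert h)
    · exact Or.inl h.2.1
    · rcases h.2 with ⟨hu, _⟩ | ⟨_, hu⟩
      · exact Or.inr hu
      · exact Or.inl hu
  symm := ⟨fun u v h => by
    rcases h with h | h | h
    · exact Or.inl (G'.adj_symm h)
    · exact Or.inr (Or.inl ⟨h.1.symm, h.2.2, h.2.1⟩)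
    · exact Or.inr (Or.inr ⟨⟨h.1.1.symm, h.1.2.symm⟩, h.2.symm⟩)⟩

open Finset in
lemma hd_eq_sum {n : ℕ} (x y : Fin n → ZMod 2) :
    hammingDist x y = ∑ i, if x i = y i then 0 else 1 := by
  rw [hammingDist, Finset.card_filter]
  congr 1; ext i; by_cases h : x i = y i <;> simp [h]


lemma snoc_last' {n : ℕ} (x : Fin n → ZMod 2) (t : ZMod 2) :
    (Fin.snoc x t : Fin (n+1) → ZMod 2) (Fin.last n) = t := by simp

lemma snoc_mem_half {n : ℕ} (x : Fin n → ZMod 2) (t : ZMod 2) :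
    (Fin.snoc x t : Fin (n+1) → ZMod 2) ∈ half n t := snoc_last' x t

lemma snoc_init_eq {n : ℕ} {z : Fin (n+1) → ZMod 2} {t : ZMod 2} (h : z (Fin.last n) = t) :
    (Fin.snoc (Fin.init z) t : Fin (n+1) → ZMod 2) = z := by
  rw [← h]; exact Fin.snoc_init_self z

/-- parity of a vertex -/
def par {n : ℕ} (x : Fin n → ZMod 2) : ZMod 2 := ∑ i, x i

lemma par_hd {n : ℕ} (x y : Fin n → ZMod 2) :
    ((hammingDist x y : ℕ) : ZMod 2) = par x + par y := by
  rw [hd_eq_sum, par, par, ← Finset.sum_add_distrib]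
  push_cast
  congr 1; ext i
  have h0 : x i = 0 ∨ x i = 1 := by revert i; intro i; exact (by decide : ∀ a : ZMod 2, a = 0 ∨ a = 1) (x i)
  have h1 : y i = 0 ∨ y i = 1 := (by decide : ∀ a : ZMod 2, a = 0 ∨ a = 1) (y i)
  rcases h0 with h0 | h0 <;> rcases h1 with h1 | h1 <;> rw [h0, h1] <;> decide

lemma cast2_zero_iff (d : ℕ) : (d : ZMod 2) = 0 ↔ d % 2 = 0 := by
  rw [ZMod.natCast_eq_zero_iff]; omega

lemma cast2_one_iff (d : ℕ) : (d : ZMod 2) = 1 ↔ d % 2 = 1 := by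
  rw [← ZMod.natCast_mod]
  rcases Nat.mod_two_eq_zero_or_one d with h | h <;> rw [h] <;> simp

/-- flip coordinate i -/
def qflip {n : ℕ} (i : Fin n) (x : Fin n → ZMod 2) : Fin n → ZMod 2 :=
  Function.update x i (x i + 1)

lemma hd_qflip {n : ℕ} (i : Fin n) (x : Fin n → ZMod 2) :
    hammingDist (qflip i x) x = 1 := by
  rw [hd_eq_sum]
  have : ∀ j, (if qflip i x j = x j then (0:ℕ) else 1) = if j = i then 1 else 0 := by
    intro j
    by_cases h : j = i
    · subst h
      have hx : ∀ a : ZMod 2, (if a + 1 = a then (0:ℕ) else 1) = 1 := by decide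
      simp [qflip, Function.update_self, hx]
    · simp [qflip, Function.update_of_ne h, h]
  rw [Finset.sum_congr rfl fun j _ => this j, Finset.sum_ite_eq' Finset.univ i fun _ => 1]
  simp

lemma par_flip {n : ℕ} (i : Fin n) (x : Fin n → ZMod 2) :
    par (qflip i x) = par x + 1 := by
  have h := par_hd (qflip i x) x
  rw [hd_qflip] at h
  have : ∀ a b : ZMod 2, (1:ZMod 2) = a + b → a = b + 1 := by decide
  exact this _ _ (by exact_mod_cast h)

lemma qflip_ne {n : ℕ} (i : Fin n) (x : Fin n → ZMod 2) : qflip i x ≠ x := by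
  intro h
  have := hd_qflip i x
  rw [h, hammingDist_self] at this
  omega

/-- walks in Q change parity each step -/
lemma walk_parity {N : ℕ} {u v : Fin N → ZMod 2} (p : (Q N).Walk u v) :
    ((p.length : ℕ) : ZMod 2) = par u + par v := by
  induction p with
  | nil => exact (by decide : ∀ a : ZMod 2, (0:ZMod 2) = a + a) _
  | @cons a b c h p ih =>
    have hd : ((1:ℕ) : ZMod 2) = par a + par b := by
      have := par_hd a b
      rwa [(h : hammingDist a b = 1)] at this
    rw [SimpleGraph.Walk.length_cons]
    push_cast at hd ⊢
    rw [ih]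
    exact (by decide : ∀ a b c : ZMod 2, (1:ZMod 2) = a + b → b + c + 1 = a + c) _ _ _ hd

lemma hd_snoc {n : ℕ} (x y : Fin n → ZMod 2) (s t : ZMod 2) :
    hammingDist (Fin.snoc x s : Fin (n+1) → ZMod 2) (Fin.snoc y t) =
      hammingDist x y + (if s = t then 0 else 1) := by
  rw [hd_eq_sum (Fin.snoc x s) (Fin.snoc y t), hd_eq_sum x y, Fin.sum_univ_castSucc]
  simp [Fin.snoc_castSucc, Fin.snoc_last]

open SimpleGraph Walk

/-- the embedding of `Q n` into `Q (n+1)` as the half with last coordinate `t` -/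
def lift (n : ℕ) (t : ZMod 2) : Q n →g Q (n+1) where
  toFun x := Fin.snoc x t
  map_rel' := by
    intro x y h
    show hammingDist _ _ = 1
    rw [hd_snoc]
    simpa using (show hammingDist x y = 1 from h)

@[simp] lemma lift_apply {n : ℕ} {t : ZMod 2} (x : Fin n → ZMod 2) :
    lift n t x = Fin.snoc x t := rfl

lemma lift_inj (n : ℕ) (t : ZMod 2) : Function.Injective (lift n t) := by
  intro x y h
  have := congrArg Fin.init h
  simpa [lift_apply, Fin.init_snoc] using this

lemma lift_last {n : ℕ} {t : ZMod 2} (x : Fin n → ZMod 2) :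
    (lift n t x) (Fin.last n) = t := by rw [lift_apply]; exact Fin.snoc_last _ _

lemma adj_cross {n : ℕ} (x : Fin n → ZMod 2) {t t' : ZMod 2} (h : t ≠ t') :
    (Q (n+1)).Adj (Fin.snoc x t) (Fin.snoc x t') := by
  show hammingDist _ _ = 1
  rw [hd_snoc, hammingDist_self]
  simp [h]

lemma mem_lift_support {n : ℕ} {t : ZMod 2} {x y : Fin n → ZMod 2} {p : (Q n).Walk x y}
    {z : Fin (n+1) → ZMod 2} (hz : z ∈ (p.map (lift n t)).support) :
    z (Fin.last n) = t ∧ Fin.init z ∈ p.support := by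
  rw [Walk.support_map, List.mem_map] at hz
  obtain ⟨w, hw, rfl⟩ := hz
  exact ⟨lift_last w, by simpa [lift_apply, Fin.init_snoc] using hw⟩

lemma append_isPath {V : Type*} {G : SimpleGraph V} {u v w : V} {p : G.Walk u v} {q : G.Walk v w}
    (hp : p.IsPath) (hq : q.IsPath)
    (hdisj : ∀ x, x ∈ p.support → x ∈ q.support → x = v) :
    (p.append q).IsPath := by
  rw [SimpleGraph.Walk.isPath_def, SimpleGraph.Walk.support_append]
  refine List.Nodup.append hp.support_nodup ?_ ?_
  · exact hq.support_nodup.tail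
  · intro x hx hx'
    have hxq : x ∈ q.support := by
      rw [q.support_eq_cons]; exact List.mem_cons_of_mem _ hx'
    have hxv : x = v := hdisj x hx hxq
    subst hxv
    have := hq.support_nodup
    rw [q.support_eq_cons] at this
    exact (List.nodup_cons.mp this).1 hx'

lemma edge_not_mem_of_path {V : Type*} {G : SimpleGraph V} {u v : V} {p : G.Walk v u}
    (hp : p.IsPath) (hlen : 2 ≤ p.length) : s(u, v) ∉ p.edges := by
  cases p with
  | nil => simp at hlen
  | @cons _ w _ h' q =>
    intro hmem
    rw [Walk.edges_cons, List.mem_cons] at hmem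
    rw [Walk.cons_isPath_iff] at hp
    rcases hmem with hmem | hmem
    · have huw : u = w := by
        rw [Sym2.eq_iff] at hmem
        rcases hmem with ⟨h1, h2⟩ | ⟨h1, _⟩
        · exact h1.trans h2
        · exact h1
      subst huw
      have : q = Walk.nil := (Walk.isPath_iff_eq_nil (p := q)).mp hp.1
      subst this
      simp at hlen
    · exact hp.2 (q.snd_mem_support_of_mem_edges hmem)

/-- join two paths in the two halves by a cross edge -/
lemma join_paths {n : ℕ} {x y z : Fin n → ZMod 2} {t t' : ZMod 2} (hts : t ≠ t')
    {p : (Q n).Walk x y} {q : (Q n).Walk y z} (hp : p.IsPath) (hq : q.IsPath) :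
    ∃ r : (Q (n+1)).Walk (Fin.snoc x t) (Fin.snoc z t'),
      r.IsPath ∧ r.length = p.length + q.length + 1 ∧
      r.support = p.support.map (fun w => Fin.snoc w t) ++
        q.support.map (fun w => Fin.snoc w t') := by
  refine ⟨(p.map (lift n t)).append (Walk.cons (adj_cross y hts) (q.map (lift n t'))), ?_, ?_, ?_⟩
  · refine append_isPath ((Walk.map_isPath_iff_of_injective (lift_inj n t)).mpr hp) ?_ ?_
    · erw [Walk.cons_isPath_iff]
      refine ⟨(Walk.map_isPath_iff_of_injective (lift_inj n t')).mpr hq, ?_⟩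
      intro hmem
      have := (mem_lift_support hmem).1
      rw [lift_last] at this
      exact hts this
    · intro a ha ha'
      have h1 := mem_lift_support ha
      erw [Walk.support_cons, List.mem_cons] at ha'
      rcases ha' with rfl | ha'
      · rfl
      · have h2 := (mem_lift_support ha').1
        rw [h1.1] at h2
        exact absurd h2 hts
  · erw [Walk.length_append, Walk.length_cons, Walk.length_map, Walk.length_map]
    ring
  · erw [Walk.support_append, Walk.support_cons, List.tail_cons, Walk.support_map,
      Walk.support_map]
    rfl

lemma hd_split {n : ℕ} (u v : Fin (n+1) → ZMod 2) :
    hammingDist u v = hammingDist (Fin.init u) (Fin.init v) +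
      (if u (Fin.last n) = v (Fin.last n) then 0 else 1) := by
  conv_lhs => rw [← Fin.snoc_init_self u, ← Fin.snoc_init_self v]
  rw [hd_snoc]

lemma hd_le {n : ℕ} (u v : Fin n → ZMod 2) : hammingDist u v ≤ n := by
  simpa using (hammingDist_le_card_fintype : hammingDist u v ≤ Fintype.card (Fin n))

lemma two_pow_mod_two {n : ℕ} (h : 1 ≤ n) : 2^n % 2 = 0 := by
  obtain ⟨m, rfl⟩ := Nat.exists_eq_add_of_le h
  rw [pow_add]
  omega

lemma two_pow_ge {n : ℕ} (h : 2 ≤ n) : n + 2 ≤ 2^n := by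
  induction n with
  | zero => omega
  | succ m ih =>
    rcases Nat.lt_or_ge m 2 with hm | hm
    · interval_cases m
      · omega
      · norm_num
    · have := ih hm
      rw [pow_succ]
      omega

lemma hd_parity_triangle {n : ℕ} (x y z : Fin n → ZMod 2) :
    hammingDist x z % 2 = (hammingDist x y + hammingDist y z) % 2 := by
  have h1 := par_hd x z
  have h2 := par_hd x y
  have h3 := par_hd y z
  have key : ((hammingDist x z : ℕ) : ZMod 2) = ((hammingDist x y + hammingDist y z : ℕ) : ZMod 2) := by
    push_cast
    rw [h1, h2, h3]
    exact (by decide : ∀ a b c : ZMod 2, a + c = (a + b) + (b + c)) _ _ _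
  rcases Nat.mod_two_eq_zero_or_one (hammingDist x z) with h | h <;>
    rcases Nat.mod_two_eq_zero_or_one (hammingDist x y + hammingDist y z) with h' | h' <;>
      rw [h, h'] <;> first
        | rfl
        | (exfalso
           rw [← ZMod.natCast_mod, ← ZMod.natCast_mod (hammingDist x y + hammingDist y z), h, h'] at key
           simp at key)

lemma hd_ne_of_odd {n : ℕ} {x y : Fin n → ZMod 2} (h : hammingDist x y % 2 = 1) : x ≠ y := by
  intro he
  rw [he, hammingDist_self] at h
  omega

theorem qpath : ∀ (n : ℕ) (u v : Fin n → ZMod 2), u ≠ v → ∀ a : ℕ,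
    hammingDist u v + 1 ≤ a →
    a + (if hammingDist u v % 2 = 0 then 1 else 0) ≤ 2^n →
    a % 2 = (hammingDist u v + 1) % 2 →
    ∃ p : (Q n).Walk u v, p.IsPath ∧ p.length + 1 = a := by
  intro n
  induction n with
  | zero => intro u v huv; exact absurd (Subsingleton.elim u v) huv
  | succ n ih =>
    intro u v huv a ha1 ha2 ha3
    have hueq : (Fin.snoc (Fin.init u) (u (Fin.last n)) : Fin (n+1) → ZMod 2) = u :=
      Fin.snoc_init_self u
    have hdn : hammingDist (Fin.init u) (Fin.init v) ≤ n := hd_le _ _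
    have hp1 : n < 2^n := Nat.lt_two_pow_self
    have hpow : 2^(n+1) = 2^n * 2 := pow_succ 2 n
    by_cases hlast : u (Fin.last n) = v (Fin.last n)
    · -- Case 1 : same half
      have hsp := hd_split u v
      rw [if_pos hlast] at hsp
      rw [hsp] at ha1 ha2 ha3
      simp only [Nat.add_zero] at ha1 ha2 ha3
      have hu₀v₀ : Fin.init u ≠ Fin.init v := by
        intro h
        apply huv
        rw [← Fin.snoc_init_self u, ← Fin.snoc_init_self v, h, hlast]
      have hn1 : 1 ≤ n := by
        rcases Nat.eq_zero_or_pos n with h | h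
        · exact absurd (by subst h; exact Subsingleton.elim _ _) hu₀v₀
        · exact h
      have hveq : (Fin.snoc (Fin.init v) (u (Fin.last n)) : Fin (n+1) → ZMod 2) = v := by
        rw [hlast]; exact Fin.snoc_init_self v
      by_cases hsmall :
          a + (if hammingDist (Fin.init u) (Fin.init v) % 2 = 0 then 1 else 0) ≤ 2^n
      · obtain ⟨p₀, hp₀, hlen⟩ := ih (Fin.init u) (Fin.init v) hu₀v₀ a (by omega) hsmall ha3
        refine ⟨(p₀.map (lift n (u (Fin.last n)))).copy (by rw [lift_apply]; exact hueq) (by rw [lift_apply]; exact hveq), ?_, ?_⟩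
        · rw [Walk.isPath_copy]
          exact Walk.map_isPath_of_injective (lift_inj _ _) hp₀
        · rw [Walk.length_copy, Walk.length_map]; omega
      · -- 1b : large a
        have hpm : 2^n % 2 = 0 := two_pow_mod_two hn1
        have hd₀pos : 1 ≤ hammingDist (Fin.init u) (Fin.init v) :=
          Nat.pos_of_ne_zero fun h => hu₀v₀ (hammingDist_eq_zero.mp h)
        obtain ⟨A0, hA01, hA02, hA03, hA04, hc1, hc2, hc3, hA0a⟩ :
            ∃ A0, (hammingDist (Fin.init u) (Fin.init v) + 1 ≤ A0) ∧
              (A0 + (if hammingDist (Fin.init u) (Fin.init v) % 2 = 0 then 1 else 0) ≤ 2^n) ∧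
              (A0 % 2 = (hammingDist (Fin.init u) (Fin.init v) + 1) % 2) ∧ 2 ≤ A0 ∧
              2 ≤ a - A0 ∧ a - A0 ≤ 2^n ∧ (a - A0) % 2 = 0 ∧ A0 ≤ a := by
          rcases Nat.mod_two_eq_zero_or_one (hammingDist (Fin.init u) (Fin.init v)) with
            hpar | hpar
          · rw [if_pos hpar] at hsmall ha2
            have hn2 : 2 ≤ n := by omega
            have hge := two_pow_ge hn2
            exact ⟨2^n - 1, by omega, by rw [if_pos hpar]; omega, by omega, by omega,
              by omega, by omega, by omega, by omega⟩
          · rw [if_neg (by omega)] at hsmall ha2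
            exact ⟨2^n, by omega, by rw [if_neg (by omega)]; omega, by omega, by omega,
              by omega, by omega, by omega, by omega⟩
        obtain ⟨p₀, hp₀, hlenp₀⟩ := ih _ _ hu₀v₀ A0 hA01 hA02 hA03
        obtain ⟨w₀, hadj₀, q, rfl⟩ := Walk.exists_eq_cons_of_ne hu₀v₀ p₀
        rw [Walk.cons_isPath_iff] at hp₀
        rw [Walk.length_cons] at hlenp₀
        have hdw : hammingDist (Fin.init u) w₀ = 1 := hadj₀
        obtain ⟨p₁, hp₁, hlenp₁⟩ := ih _ _ hadj₀.ne (a - A0) (by omega)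
          (by rw [hdw, if_neg (by norm_num)]; omega) (by rw [hdw]; omega)
        obtain ⟨r₁, hr₁, hr₁l, hr₁s⟩ := join_paths (t := u (Fin.last n) + 1)
          (t' := u (Fin.last n)) ((by decide : ∀ t : ZMod 2, t + 1 ≠ t) _) hp₁ hp₀.1
        have hadj : (Q (n+1)).Adj u (Fin.snoc (Fin.init u) (u (Fin.last n) + 1)) := by
          have h := adj_cross (n := n) (Fin.init u)
            ((by decide : ∀ t : ZMod 2, t ≠ t + 1) (u (Fin.last n)))
          rwa [hueq] at h
        have hrp : (Walk.cons hadj r₁).IsPath := by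
          rw [Walk.cons_isPath_iff]
          refine ⟨hr₁, ?_⟩
          rw [hr₁s]
          intro hmem
          rw [List.mem_append] at hmem
          rcases hmem with hmem | hmem
          · rw [List.mem_map] at hmem
            obtain ⟨w, _, hw⟩ := hmem
            have h2 := congrFun hw (Fin.last n)
            rw [Fin.snoc_last] at h2
            exact (by decide : ∀ t : ZMod 2, ¬(t + 1 = t)) _ h2
          · rw [List.mem_map] at hmem
            obtain ⟨w, hwq, hw⟩ := hmem
            have h2 : w = Fin.init u := by
              have h3 := congrArg Fin.init hw
              rwa [Fin.init_snoc] at h3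
            rw [h2] at hwq
            exact hp₀.2 hwq
        refine ⟨(Walk.cons hadj r₁).copy rfl hveq, by rwa [Walk.isPath_copy], ?_⟩
        rw [Walk.length_copy, Walk.length_cons, hr₁l]
        omega
    · -- Case 2 : different halves
      have hsp := hd_split u v
      rw [if_neg hlast] at hsp
      rw [hsp] at ha1 ha2 ha3
      have hveq : (Fin.snoc (Fin.init v) (v (Fin.last n)) : Fin (n+1) → ZMod 2) = v :=
        Fin.snoc_init_self v
      by_cases hd₀0 : hammingDist (Fin.init u) (Fin.init v) = 0
      · -- same projection
        have huv₀ : Fin.init u = Fin.init v := hammingDist_eq_zero.mp hd₀0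
        rw [hd₀0] at ha1 ha2 ha3
        norm_num at ha2 ha3
        by_cases ha4 : a = 2
        · have hadj : (Q (n+1)).Adj u v := by
            show hammingDist u v = 1
            rw [hsp, hd₀0]
          refine ⟨Walk.cons hadj Walk.nil, ?_, by simp [ha4]⟩
          rw [Walk.cons_isPath_iff]
          exact ⟨Walk.IsPath.nil, by simp [huv]⟩
        · have ha5 : 4 ≤ a := by omega
          have hn1 : 1 ≤ n := by
            by_contra h
            have hn0 : n = 0 := by omega
            subst hn0
            norm_num at ha2
            omega
          have h2n : 2 ≤ 2^n := by
            calc 2 = 2^1 := by norm_num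
            _ ≤ 2^n := Nat.pow_le_pow_right (by norm_num) hn1
          have hpm : 2^n % 2 = 0 := two_pow_mod_two hn1
          set i₀ : Fin n := ⟨0, by omega⟩ with hi₀
          have hdw : hammingDist (Fin.init u) (qflip i₀ (Fin.init u)) = 1 := by
            rw [hammingDist_comm]; exact hd_qflip _ _
          have hdw' : hammingDist (qflip i₀ (Fin.init u)) (Fin.init v) = 1 := by
            rw [← huv₀]; exact hd_qflip _ _
          obtain ⟨b, c, hb1, hb2, hb3, hcc1, hcc2, hcc3, hbc⟩ :
              ∃ b c, 2 ≤ b ∧ b ≤ 2^n ∧ b % 2 = 0 ∧ 2 ≤ c ∧ c ≤ 2^n ∧ c % 2 = 0 ∧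
                b + c = a := by
            by_cases h : a ≤ 2^n + 2
            · exact ⟨2, a - 2, by omega, by omega, by omega, by omega, by omega, by omega,
                by omega⟩
            · exact ⟨a - 2^n, 2^n, by omega, by omega, by omega, by omega, by omega,
                by omega, by omega⟩
          obtain ⟨p, hp, hlp⟩ := ih (Fin.init u) (qflip i₀ (Fin.init u))
            (Ne.symm (qflip_ne i₀ (Fin.init u))) b (by omega)
            (by rw [hdw, if_neg (by norm_num)]; omega) (by rw [hdw]; omega)
          have hne' : qflip i₀ (Fin.init u) ≠ Fin.init v := by
            intro h
            rw [h, hammingDist_self] at hdw'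
            omega
          obtain ⟨q, hq, hlq⟩ := ih _ _ hne' c (by omega)
            (by rw [hdw', if_neg (by norm_num)]; omega) (by rw [hdw']; omega)
          obtain ⟨r, hr, hrl, _⟩ := join_paths hlast hp hq
          exact ⟨r.copy hueq hveq, by rwa [Walk.isPath_copy],
            by rw [Walk.length_copy, hrl]; omega⟩
      · -- distinct projections
        have hd₀pos : 1 ≤ hammingDist (Fin.init u) (Fin.init v) := by omega
        have hu₀v₀ : Fin.init u ≠ Fin.init v := fun h => hd₀0 (by rw [h, hammingDist_self])
        have hn1 : 1 ≤ n := by omega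
        have hpm : 2^n % 2 = 0 := two_pow_mod_two hn1
        by_cases hsmall :
            a - 1 + (if hammingDist (Fin.init u) (Fin.init v) % 2 = 0 then 1 else 0) ≤ 2^n
        · obtain ⟨p, hp, hlp⟩ := ih _ _ hu₀v₀ (a - 1) (by omega) hsmall (by omega)
          obtain ⟨r, hr, hrl, _⟩ := join_paths hlast hp
            (Walk.IsPath.nil (u := Fin.init v) (G := Q n))
          exact ⟨r.copy hueq hveq, by rwa [Walk.isPath_copy],
            by rw [Walk.length_copy, hrl, Walk.length_nil]; omega⟩
        · rcases Nat.mod_two_eq_zero_or_one (hammingDist (Fin.init u) (Fin.init v)) with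
            hpar | hpar
          · -- d₀ even, ≥ 2
            rw [if_pos hpar] at hsmall
            rw [if_neg (by omega)] at ha2
            have hd₀2 : 2 ≤ hammingDist (Fin.init u) (Fin.init v) := by omega
            obtain ⟨i, hi⟩ := Function.ne_iff.mp hu₀v₀
            have hdw : hammingDist (Fin.init u) (qflip i (Fin.init u)) = 1 := by
              rw [hammingDist_comm]; exact hd_qflip _ _
            have htri := hd_parity_triangle (qflip i (Fin.init u)) (Fin.init u) (Fin.init v)
            rw [hd_qflip] at htri
            have hdwv : hammingDist (qflip i (Fin.init u)) (Fin.init v) % 2 = 1 := by omega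
            have hdwvle : hammingDist (qflip i (Fin.init u)) (Fin.init v) ≤ n := hd_le _ _
            obtain ⟨p, hp, hlp⟩ := ih (Fin.init u) (qflip i (Fin.init u))
              (Ne.symm (qflip_ne i (Fin.init u))) (a - 2^n) (by omega)
              (by rw [hdw, if_neg (by norm_num)]; omega) (by rw [hdw]; omega)
            obtain ⟨q, hq, hlq⟩ := ih _ _ (hd_ne_of_odd hdwv) (2^n) (by omega)
              (by rw [if_neg (by omega)]; omega) (by omega)
            obtain ⟨r, hr, hrl, _⟩ := join_paths hlast hp hq
            exact ⟨r.copy hueq hveq, by rwa [Walk.isPath_copy],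
              by rw [Walk.length_copy, hrl]; omega⟩
          · -- d₀ odd
            rw [if_neg (by omega)] at hsmall
            rw [if_pos (by omega)] at ha2
            have hage : 2^n + 3 ≤ a := by omega
            have hn2 : 2 ≤ n := by
              by_contra h
              have hn1' : n = 1 := by omega
              subst hn1'
              norm_num at hage ha2
              omega
            set i₀ : Fin n := ⟨0, by omega⟩ with hi₀
            set i₁ : Fin n := ⟨1, by omega⟩ with hi₁
            have hne01 : i₀ ≠ i₁ := by simp [hi₀, hi₁, Fin.ext_iff]
            have hd1 : hammingDist (qflip i₁ (Fin.init v)) (Fin.init v) = 1 := hd_qflip _ _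
            have hd2 : hammingDist (qflip i₀ (qflip i₁ (Fin.init v)))
                (qflip i₁ (Fin.init v)) = 1 := hd_qflip _ _
            have htri1 : hammingDist (qflip i₀ (qflip i₁ (Fin.init v))) (Fin.init v) ≤ 2 := by
              have := hammingDist_triangle (qflip i₀ (qflip i₁ (Fin.init v)))
                (qflip i₁ (Fin.init v)) (Fin.init v)
              omega
            have htri2 : hammingDist (qflip i₀ (qflip i₁ (Fin.init v))) (Fin.init v) % 2
                = 0 := by
              have := hd_parity_triangle (qflip i₀ (qflip i₁ (Fin.init v)))
                (qflip i₁ (Fin.init v)) (Fin.init v)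
              omega
            have htri3 : hammingDist (Fin.init u) (qflip i₀ (qflip i₁ (Fin.init v))) % 2
                = 1 := by
              have h4 := hd_parity_triangle (Fin.init u) (Fin.init v)
                (qflip i₀ (qflip i₁ (Fin.init v)))
              have h5 : hammingDist (Fin.init v) (qflip i₀ (qflip i₁ (Fin.init v)))
                  = hammingDist (qflip i₀ (qflip i₁ (Fin.init v))) (Fin.init v) :=
                hammingDist_comm _ _
              omega
            have hwne : qflip i₀ (qflip i₁ (Fin.init v)) ≠ Fin.init v := by
              intro h
              have h0 := congrFun h i₀
              simp only [qflip, Function.update_self, Function.update_of_ne hne01] at h0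
              exact (by decide : ∀ t : ZMod 2, ¬(t + 1 = t)) _ h0
            have hwle : hammingDist (Fin.init u) (qflip i₀ (qflip i₁ (Fin.init v))) ≤ n :=
              hd_le _ _
            obtain ⟨p, hp, hlp⟩ := ih _ _ (hd_ne_of_odd htri3) (2^n) (by omega)
              (by rw [if_neg (by omega)]; omega) (by omega)
            obtain ⟨q, hq, hlq⟩ := ih _ _ hwne (a - 2^n) (by omega)
              (by rw [if_pos htri2]; omega) (by omega)
            obtain ⟨r, hr, hrl, _⟩ := join_paths hlast hp hq
            exact ⟨r.copy hueq hveq, by rwa [Walk.isPath_copy],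
              by rw [Walk.length_copy, hrl]; omega⟩

lemma card_half (n : ℕ) (t : ZMod 2) : Nat.card ↥(half n t) = 2^n := by
  have e : (Fin n → ZMod 2) ≃ ↥(half n t) :=
    { toFun := fun x => ⟨Fin.snoc x t, snoc_mem_half x t⟩
      invFun := fun y => Fin.init y.1
      left_inv := fun x => by simp
      right_inv := fun y => Subtype.ext (snoc_init_eq y.2) }
  rw [← Nat.card_congr e, Nat.card_fun, Nat.card_eq_fintype_card, Nat.card_eq_fintype_card,
    ZMod.card, Fintype.card_fin]

/-- embedding of `Q n` into the half `(Q_n, 1)` of the mixed graph -/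
def H1hom (n : ℕ) (G' : (Q (n+1)).Subgraph) : Q n →g (mix n G').coe where
  toFun x := ⟨Fin.snoc x 1, Set.mem_union_left _ (snoc_mem_half x 1)⟩
  map_rel' := by
    intro x y h
    show (mix n G').Adj _ _
    refine Or.inr (Or.inl ⟨?_, snoc_mem_half x 1, snoc_mem_half y 1⟩)
    show hammingDist _ _ = 1
    rw [hd_snoc]
    simpa using (show hammingDist x y = 1 from h)

lemma H1hom_apply {n : ℕ} {G' : (Q (n+1)).Subgraph} (x : Fin n → ZMod 2) :
    ((H1hom n G' x : ↥((mix n G').verts)) : Fin (n+1) → ZMod 2) = Fin.snoc x 1 := rfl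

lemma H1hom_inj {n : ℕ} {G' : (Q (n+1)).Subgraph} : Function.Injective (H1hom n G') := by
  intro x y h
  have h1 : (Fin.snoc x 1 : Fin (n+1) → ZMod 2) = Fin.snoc y 1 := by
    rw [← H1hom_apply (G' := G') x, ← H1hom_apply (G' := G') y, h]
  have h2 := congrArg Fin.init h1
  rwa [Fin.init_snoc, Fin.init_snoc] at h2

/-- embedding of `G'` into the mixed graph -/
def HGhom (n : ℕ) (G' : (Q (n+1)).Subgraph) : G'.coe →g (mix n G').coe where
  toFun x := ⟨x.1, Set.mem_union_right _ x.2⟩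
  map_rel' := by
    intro x y h
    show (mix n G').Adj _ _
    exact Or.inl h

lemma HGhom_apply {n : ℕ} {G' : (Q (n+1)).Subgraph} (x : ↥G'.verts) :
    ((HGhom n G' x : ↥((mix n G').verts)) : Fin (n+1) → ZMod 2) = x.1 := rfl

lemma HGhom_inj {n : ℕ} {G' : (Q (n+1)).Subgraph} : Function.Injective (HGhom n G') := by
  intro x y h
  have h1 : (x : Fin (n+1) → ZMod 2) = y.1 := by
    rw [← HGhom_apply (n := n) x, ← HGhom_apply (n := n) y, h]
  exact Subtype.ext h1

/-- If `G'` is a Hamiltonian subgraph of the half `(Q_n,0)` of `Q_{n+1}` (`n ≥ 2`), `R'` the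
set of cross edges between `(Q_n,1)` and `G'`, then `G = (Q_n,1) ∪ R' ∪ G'` is bipancyclic. -/
theorem stmt6 (n : ℕ) (hn : 2 ≤ n) (G' : (Q (n+1)).Subgraph)
    (hhalf : G'.verts ⊆ half n 0)
    (hham : ∃ (v : G'.verts) (c : G'.coe.Walk v v), c.IsHamiltonianCycle) :
    Bipancyclic (mix n G').coe := by
  classical
  obtain ⟨v, c, hc⟩ := hham
  haveI : Fintype ↥G'.verts := Fintype.ofFinite _
  intro l hl4 hlcard hleven
  obtain ⟨w, hvw, q, rfl⟩ := Walk.not_nil_iff.mp hc.isCycle.not_nil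
  have hcyc := hc.isCycle
  rw [Walk.cons_isCycle_iff] at hcyc
  obtain ⟨hqpath, hqe⟩ := hcyc
  -- the number of vertices of G'
  have hcov : ∀ x : ↥G'.verts, x ∈ q.support := by
    intro x
    have hx := hc.mem_support x
    rw [Walk.support_cons] at hx
    rcases List.mem_cons.mp hx with rfl | hx
    · exact q.end_mem_support
    · exact hx
  have hqlen : q.support.length = Fintype.card ↥G'.verts := by
    have h1 : q.support.toFinset = Finset.univ := Finset.eq_univ_iff_forall.mpr
      fun x => List.mem_toFinset.mpr (hcov x)
    have h2 := List.toFinset_card_of_nodup hqpath.support_nodup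
    rw [h1, Finset.card_univ] at h2
    exact h2.symm
  have hm : q.length + 1 = Nat.card ↥G'.verts := by
    rw [Nat.card_eq_fintype_card, ← hqlen, Walk.length_support]
  -- the number of vertices of G' is even
  have hmeven : (q.length + 1) % 2 = 0 := by
    have hwp := walk_parity ((Walk.cons hvw q).map G'.hom)
    rw [Walk.length_map, Walk.length_cons] at hwp
    have hz : par (G'.hom v) + par (G'.hom v) = 0 :=
      (by decide : ∀ a : ZMod 2, a + a = 0) _
    rw [hz] at hwp
    exact (cast2_zero_iff _).mp hwp
  -- the number of vertices of G' is at most 2^n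
  have hmle : Nat.card ↥G'.verts ≤ 2^n := by
    have h := Nat.card_le_card_of_injective (Set.inclusion hhalf) (Set.inclusion_injective hhalf)
    rwa [card_half] at h
  -- the vertex count of the mixed graph
  have hcard : Nat.card ↥((mix n G').verts) ≤ 2^n + Nat.card ↥G'.verts := by
    have h1 : (mix n G').verts = half n 1 ∪ G'.verts := rfl
    rw [h1, Nat.card_coe_set_eq]
    have h2 := Set.ncard_union_le (half n 1) G'.verts
    have h3 : (half n 1).ncard = 2^n := by rw [← Nat.card_coe_set_eq, card_half]
    have h4 : G'.verts.ncard = Nat.card ↥G'.verts := (Nat.card_coe_set_eq _).symm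
    omega
  have hpm : 2^n % 2 = 0 := two_pow_mod_two (by omega)
  rw [Nat.even_iff] at hleven
  by_cases hl2 : l ≤ 2^n
  · -- short cycles live inside the half `(Q_n, 1)`
    have hi₀ : 0 < n := by omega
    set i₀ : Fin n := ⟨0, hi₀⟩ with hidef
    set u₀ : Fin n → ZMod 2 := fun _ => 0 with hu₀
    have hdv : hammingDist u₀ (qflip i₀ u₀) = 1 := by
      rw [hammingDist_comm]; exact hd_qflip _ _
    obtain ⟨p, hp, hlp⟩ := qpath n u₀ (qflip i₀ u₀) (Ne.symm (qflip_ne i₀ u₀)) l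
      (by omega) (by rw [hdv, if_neg (by norm_num)]; omega) (by rw [hdv]; omega)
    have hadj : (Q n).Adj u₀ (qflip i₀ u₀) := hdv
    have hcyc0 : (Walk.cons hadj p.reverse).IsCycle := by
      rw [Walk.cons_isCycle_iff]
      refine ⟨hp.reverse, ?_⟩
      apply edge_not_mem_of_path hp.reverse
      rw [Walk.length_reverse]
      omega
    refine ⟨H1hom n G' u₀, (Walk.cons hadj p.reverse).map (H1hom n G'),
      (Walk.map_isCycle_iff_of_injective H1hom_inj).mpr hcyc0, ?_⟩
    rw [Walk.length_map, Walk.length_cons, Walk.length_reverse]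
    omega
  · -- long cycles use all of the half `(Q_n, 1)` plus an arc of the hamiltonian cycle
    have hlm : l ≤ 2^n + Nat.card ↥G'.verts := le_trans hlcard hcard
    have hv0 : (v : Fin (n+1) → ZMod 2) (Fin.last n) = 0 := hhalf v.2
    have hw0 : (w : Fin (n+1) → ZMod 2) (Fin.last n) = 0 := hhalf w.2
    have hvwadj : (Q (n+1)).Adj v.1 w.1 := G'.adj_sub hvw
    have hvwne : (v : ↥G'.verts) ≠ w := hvw.ne
    have hdvw : hammingDist (Fin.init (v.1 : Fin (n+1) → ZMod 2))
        (Fin.init (w.1 : Fin (n+1) → ZMod 2)) = 1 := by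
      have h := hd_split v.1 w.1
      rw [if_pos (by rw [hv0, hw0])] at h
      have h2 : hammingDist (v.1 : Fin (n+1) → ZMod 2) w.1 = 1 := hvwadj
      omega
    have hdwv : hammingDist (Fin.init (w.1 : Fin (n+1) → ZMod 2))
        (Fin.init (v.1 : Fin (n+1) → ZMod 2)) = 1 := by
      rw [hammingDist_comm]; exact hdvw
    obtain ⟨p, hp, hlp⟩ := qpath n (Fin.init w.1) (Fin.init v.1)
      (hd_ne_of_odd (by omega)) (l - (q.length + 1))
      (by omega) (by rw [hdwv, if_neg (by norm_num)]; omega) (by rw [hdwv]; omega)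
    -- the two cross edges
    have hwsnoc : (Fin.snoc (Fin.init (w.1 : Fin (n+1) → ZMod 2)) 0 : Fin (n+1) → ZMod 2)
        = w.1 := snoc_init_eq hw0
    have hvsnoc : (Fin.snoc (Fin.init (v.1 : Fin (n+1) → ZMod 2)) 0 : Fin (n+1) → ZMod 2)
        = v.1 := snoc_init_eq hv0
    have h₁ : (mix n G').coe.Adj (HGhom n G' w) (H1hom n G' (Fin.init w.1)) := by
      show (mix n G').Adj w.1 (Fin.snoc (Fin.init (w.1 : Fin (n+1) → ZMod 2)) 1)
      refine Or.inr (Or.inr ⟨⟨?_, ?_⟩, Or.inl ⟨w.2, snoc_mem_half _ 1⟩⟩)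
      · show hammingDist _ _ = 1
        nth_rewrite 1 [← hwsnoc]
        rw [hd_snoc, hammingDist_self, if_neg (by decide)]
      · rw [hw0, snoc_last']
        decide
    have h₂ : (mix n G').coe.Adj (H1hom n G' (Fin.init v.1)) (HGhom n G' v) := by
      show (mix n G').Adj (Fin.snoc (Fin.init (v.1 : Fin (n+1) → ZMod 2)) 1) v.1
      refine Or.inr (Or.inr ⟨⟨?_, ?_⟩, Or.inr ⟨v.2, snoc_mem_half _ 1⟩⟩)
      · show hammingDist _ _ = 1
        nth_rewrite 2 [← hvsnoc]
        rw [hd_snoc, hammingDist_self, if_neg (by decide)]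
      · rw [hv0, snoc_last']
        decide
    -- the pieces
    have hP1path : (p.map (H1hom n G')).IsPath :=
      Walk.map_isPath_of_injective H1hom_inj hp
    have hAGpath : (q.reverse.map (HGhom n G')).IsPath :=
      Walk.map_isPath_of_injective HGhom_inj hqpath.reverse
    have hsupP1 : ∀ x, x ∈ (p.map (H1hom n G')).support →
        (x : Fin (n+1) → ZMod 2) (Fin.last n) = 1 := by
      intro x hx
      rw [Walk.support_map, List.mem_map] at hx
      obtain ⟨z, _, rfl⟩ := hx
      rw [H1hom_apply, snoc_last']
    have hsupAG : ∀ x, x ∈ (q.reverse.map (HGhom n G')).support →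
        (x : Fin (n+1) → ZMod 2) (Fin.last n) = 0 := by
      intro x hx
      rw [Walk.support_map, List.mem_map] at hx
      obtain ⟨z, _, rfl⟩ := hx
      rw [HGhom_apply]
      exact hhalf z.2
    have hVb1 : ((H1hom n G' (Fin.init v.1) : ↥((mix n G').verts)) :
        Fin (n+1) → ZMod 2) (Fin.last n) = 1 := by
      rw [H1hom_apply, snoc_last']
    have hWb1 : ((H1hom n G' (Fin.init w.1) : ↥((mix n G').verts)) :
        Fin (n+1) → ZMod 2) (Fin.last n) = 1 := by
      rw [H1hom_apply, snoc_last']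
    have hR : ((p.map (H1hom n G')).append
        (Walk.cons h₂ (q.reverse.map (HGhom n G')))).IsPath := by
      refine append_isPath hP1path ?_ ?_
      · rw [Walk.cons_isPath_iff]
        refine ⟨hAGpath, fun hmem => ?_⟩
        have h0 := hsupAG _ hmem
        rw [h0] at hVb1
        exact (by decide : ¬((0:ZMod 2) = 1)) hVb1
      · intro x hx hx'
        rw [Walk.support_cons, List.mem_cons] at hx'
        rcases hx' with rfl | hx'
        · rfl
        · have h0 := hsupAG _ hx'
          have h1 := hsupP1 _ hx
          rw [h0] at h1
          exact absurd h1 (by decide)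
    have hE : s(HGhom n G' w, H1hom n G' (Fin.init w.1)) ∉
        ((p.map (H1hom n G')).append
          (Walk.cons h₂ (q.reverse.map (HGhom n G')))).edges := by
      intro hmem
      rw [Walk.edges_append, List.mem_append] at hmem
      rcases hmem with hmem | hmem
      · have h1 := hsupP1 _ (Walk.fst_mem_support_of_mem_edges _ hmem)
        rw [HGhom_apply, hw0] at h1
        exact (by decide : ¬((0:ZMod 2) = 1)) h1
      · rw [Walk.edges_cons, List.mem_cons] at hmem
        rcases hmem with heq | hmem
        · rw [Sym2.eq_iff] at heq
          rcases heq with ⟨h1, _⟩ | ⟨h1, _⟩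
          · have h3 := congrArg
              (fun z : ↥((mix n G').verts) => (z : Fin (n+1) → ZMod 2) (Fin.last n)) h1
            simp only [HGhom_apply] at h3
            rw [hw0, hVb1] at h3
            exact (by decide : ¬((0:ZMod 2) = 1)) h3
          · exact hvwne (HGhom_inj h1).symm
        · have h1 := hsupAG _ (Walk.snd_mem_support_of_mem_edges _ hmem)
          rw [hWb1] at h1
          exact (by decide : ¬((1:ZMod 2) = 0)) h1
    have hcyc2 : (Walk.cons h₁ ((p.map (H1hom n G')).append
        (Walk.cons h₂ (q.reverse.map (HGhom n G'))))).IsCycle := by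
      rw [Walk.cons_isCycle_iff]
      exact ⟨hR, hE⟩
    refine ⟨HGhom n G' w, _, hcyc2, ?_⟩
    rw [Walk.length_cons, Walk.length_append, Walk.length_cons, Walk.length_map,
      Walk.length_map, Walk.length_reverse]
    omega
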